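/- If G is a graph such that for every edge ab ∈ E(G), the localization G_{ab} is well-covered and α(G_{ab}) = α(G) − 1, then G is well-covered. -/

import Mathlib

open Classical

noncomputable section

variable {V : Type*}

/-- `s` is an independent set of `G`. -/
def IndepSet (G : SimpleGraph V) (s : Set V) : Prop :=
  ∀ ⦃a⦄, a ∈ s → ∀ ⦃b⦄, b ∈ s → ¬ G.Adj a b

/-- The independence number `α(G)`. -/
def alphaNum [Fintype V] (G : SimpleGraph V) : ℕ :=
  sSup {n | ∃ s : Set V, IndepSet G s ∧ s.ncard = n}

/-- `s` is a maximal independent set of `G`. -/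
def MaximalIndep (G : SimpleGraph V) (s : Set V) : Prop :=
  IndepSet G s ∧ ∀ t : Set V, IndepSet G t → s ⊆ t → s = t

/-- `G` is well-covered: all maximal independent sets have cardinality `α(G)`. -/
def WellCovered [Fintype V] (G : SimpleGraph V) : Prop :=
  ∀ s : Set V, MaximalIndep G s → s.ncard = alphaNum G

/-- The open neighborhood `N_G(S)` of a set of vertices. -/
def openNbhd (G : SimpleGraph V) (S : Set V) : Set V :=
  {v | v ∉ S ∧ ∃ u ∈ S, G.Adj u v}

/-- The closed neighborhood `N_G[S]`. -/
def closedNbhd (G : SimpleGraph V) (S : Set V) : Set V :=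
  S ∪ openNbhd G S

/-- The vertex set of the localization `G_S = G - N_G[S]`. -/
def localSet (G : SimpleGraph V) (S : Set V) : Set V :=
  (closedNbhd G S)ᶜ

/-- `G` belongs to the class `W_p`. -/
def Wp (p : ℕ) [Fintype V] (G : SimpleGraph V) : Prop :=
  p ≤ Fintype.card V ∧
    ∀ A : Fin p → Set V,
      (∀ i, IndepSet G (A i)) →
      (∀ i j, i ≠ j → Disjoint (A i) (A j)) →
      ∃ S : Fin p → Set V,
        (∀ i j, i ≠ j → Disjoint (S i) (S j)) ∧
        (∀ i, IndepSet G (S i) ∧ (S i).ncard = alphaNum G) ∧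
        (∀ i, A i ⊆ S i)

/-- `G` is `α`-critical: deleting any edge increases the independence number. -/
def AlphaCritical [Fintype V] (G : SimpleGraph V) : Prop :=
  ∀ a b : V, G.Adj a b → alphaNum G < alphaNum (G.deleteEdges {s(a, b)})

/-- The vertex set of `G_{ab} = G - (N_G(a) ∪ N_G(b))`. -/
def edgeLocalSet (G : SimpleGraph V) (a b : V) : Set V :=
  (G.neighborSet a ∪ G.neighborSet b)ᶜ

lemma ncard_le_fcard [Fintype V] (s : Set V) : s.ncard ≤ Fintype.card V := by
  have := Set.ncard_le_ncard (Set.subset_univ s) Set.finite_univ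
  simpa [Set.ncard_univ, Nat.card_eq_fintype_card] using this

lemma alpha_bdd [Fintype V] (G : SimpleGraph V) :
    BddAbove {n | ∃ s : Set V, IndepSet G s ∧ s.ncard = n} := by
  refine ⟨Fintype.card V, ?_⟩
  rintro n ⟨s, _, rfl⟩
  exact ncard_le_fcard s

lemma indep_ncard_le_alpha [Fintype V] (G : SimpleGraph V) {s : Set V}
    (hs : IndepSet G s) : s.ncard ≤ alphaNum G :=
  le_csSup (alpha_bdd G) ⟨s, hs, rfl⟩

lemma exists_indep_alpha [Fintype V] (G : SimpleGraph V) :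
    ∃ s : Set V, IndepSet G s ∧ s.ncard = alphaNum G := by
  have hne : {n | ∃ s : Set V, IndepSet G s ∧ s.ncard = n}.Nonempty :=
    ⟨0, ∅, fun a ha => absurd ha (Set.notMem_empty a), by simp⟩
  exact Nat.sSup_mem hne (alpha_bdd G)

lemma exists_maximal_superset [Fintype V] (G : SimpleGraph V) {s : Set V}
    (hs : IndepSet G s) : ∃ t, s ⊆ t ∧ MaximalIndep G t := by
  set P := {n | ∃ t : Set V, s ⊆ t ∧ IndepSet G t ∧ t.ncard = n} with hP
  have hne : P.Nonempty := ⟨s.ncard, s, subset_rfl, hs, rfl⟩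
  have hbdd : BddAbove P := by
    refine ⟨Fintype.card V, ?_⟩
    rintro n ⟨t, _, _, rfl⟩
    exact ncard_le_fcard t
  obtain ⟨t, hst, hti, hcard⟩ := Nat.sSup_mem hne hbdd
  refine ⟨t, hst, hti, fun t' ht' htt' => ?_⟩
  have hle : t'.ncard ≤ sSup P := le_csSup hbdd ⟨t', hst.trans htt', ht', rfl⟩
  exact Set.eq_of_subset_of_ncard_le htt' (hcard ▸ hle) (Set.toFinite t')

lemma maximalIndep_of_card [Fintype V] {G : SimpleGraph V} {s : Set V}
    (hs : IndepSet G s) (hc : s.ncard = alphaNum G) : MaximalIndep G s := by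
  refine ⟨hs, fun t ht hst => ?_⟩
  exact Set.eq_of_subset_of_ncard_le hst
    (le_trans (indep_ncard_le_alpha G ht) hc.ge) (Set.toFinite t)

theorem stmt4 [Fintype V] (G : SimpleGraph V)
    (h : ∀ a b : V, G.Adj a b →
      WellCovered (G.induce (edgeLocalSet G a b)) ∧
        alphaNum (G.induce (edgeLocalSet G a b)) = alphaNum G - 1) :
    WellCovered G := by
  intro S hS
  -- pick a maximum independent set I maximizing (I ∩ S).ncard
  set Q := {n | ∃ I : Set V, IndepSet G I ∧ I.ncard = alphaNum G ∧ (I ∩ S).ncard = n}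
    with hQ
  have hQne : Q.Nonempty := by
    obtain ⟨I, hI, hc⟩ := exists_indep_alpha G
    exact ⟨(I ∩ S).ncard, I, hI, hc, rfl⟩
  have hQbdd : BddAbove Q := by
    refine ⟨Fintype.card V, ?_⟩
    rintro n ⟨I, _, _, rfl⟩
    exact ncard_le_fcard _
  obtain ⟨I, hIind, hIcard, hIS⟩ := Nat.sSup_mem hQne hQbdd
  by_cases hSI : S ⊆ I
  · rw [hS.2 I hIind hSI]; exact hIcard
  · exfalso
    obtain ⟨u, huS, huI⟩ := Set.not_subset.mp hSI
    have hImax : MaximalIndep G I := maximalIndep_of_card hIind hIcard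
    -- u has a neighbor v in I
    have hv : ∃ v ∈ I, G.Adj u v := by
      by_contra hcon
      push_neg at hcon
      have hind : IndepSet G (insert u I) := by
        intro a ha b hb hab
        rcases ha with rfl | ha
        · rcases hb with rfl | hb
          · exact G.loopless.irrefl _ hab
          · exact hcon b hb hab
        · rcases hb with rfl | hb
          · exact hcon a ha hab.symm
          · exact hIind ha hb hab
      have := hImax.2 _ hind (Set.subset_insert u I)
      exact huI (this ▸ Set.mem_insert u I)
    obtain ⟨v, hvI, huv⟩ := hv
    obtain ⟨hWC, hα⟩ := h u v huv
    set L := edgeLocalSet G u v with hL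
    haveI : Fintype ↥L := Fintype.ofFinite _
    -- u ∉ L
    have huL : u ∉ L := by
      intro hu
      exact hu (Or.inr huv.symm)
    -- I ∩ S lifts into L
    have hISL : ∀ x ∈ I ∩ S, x ∈ L := by
      rintro x ⟨hxI, hxS⟩ hx
      rcases hx with hx | hx
      · exact hS.1 huS hxS hx
      · exact hIind hvI hxI hx
    -- the preimage of I in L is independent in the induced graph
    have ht0 : IndepSet (G.induce L) (Subtype.val ⁻¹' I) := by
      intro a ha b hb hab
      exact hIind ha hb hab
    obtain ⟨T, hsubT, hTmax⟩ := exists_maximal_superset (G.induce L) ht0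
    have hTcard : T.ncard = alphaNum G - 1 := by
      rw [hWC T hTmax, hα]
    have hTimg : IndepSet G (Subtype.val '' T) := by
      rintro a ⟨x, hx, rfl⟩ b ⟨y, hy, rfl⟩ hab
      exact hTmax.1 hx hy hab
    -- J := insert u (val '' T) is independent of size alphaNum G
    have hJind : IndepSet G (insert u (Subtype.val '' T)) := by
      intro a ha b hb hab
      rcases ha with rfl | ha
      · rcases hb with rfl | hb
        · exact G.loopless.irrefl _ hab
        · obtain ⟨x, hx, rfl⟩ := hb
          exact x.2 (Or.inl hab)
      · rcases hb with rfl | hb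
        · obtain ⟨x, hx, rfl⟩ := ha
          exact x.2 (Or.inl hab.symm)
        · exact hTimg ha hb hab
    have huT : u ∉ Subtype.val '' T := by
      rintro ⟨x, hx, hxu⟩
      exact huL (hxu ▸ x.2)
    have himgcard : (Subtype.val '' T).ncard = T.ncard :=
      Set.ncard_image_of_injective T Subtype.val_injective
    have halpha_pos : 1 ≤ alphaNum G := by
      have : IndepSet G {u} := by
        intro a ha b hb hab
        rw [Set.mem_singleton_iff] at ha hb
        subst ha; subst hb
        exact G.loopless.irrefl _ hab
      have := indep_ncard_le_alpha G this
      simpa using this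
    have hJcard : (insert u (Subtype.val '' T)).ncard = alphaNum G := by
      rw [Set.ncard_insert_of_notMem huT (Set.toFinite _), himgcard, hTcard]
      omega
    -- I ∩ S ⊆ val '' T
    have hIST : I ∩ S ⊆ Subtype.val '' T := by
      intro x hx
      exact ⟨⟨x, hISL x hx⟩, hsubT hx.1, rfl⟩
    -- so insert u (I ∩ S) ⊆ J ∩ S
    have hsubJ : insert u (I ∩ S) ⊆ insert u (Subtype.val '' T) ∩ S := by
      rintro x (rfl | hx)
      · exact ⟨Set.mem_insert _ _, huS⟩
      · exact ⟨Set.mem_insert_of_mem _ (hIST hx), hx.2⟩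
    have huIS : u ∉ I ∩ S := fun hx => huI hx.1
    have hge : (I ∩ S).ncard + 1 ≤ ((insert u (Subtype.val '' T)) ∩ S).ncard := by
      have h1 : (insert u (I ∩ S)).ncard = (I ∩ S).ncard + 1 :=
        Set.ncard_insert_of_notMem huIS (Set.toFinite _)
      rw [← h1]
      exact Set.ncard_le_ncard hsubJ (Set.toFinite _)
    have hmem : ((insert u (Subtype.val '' T)) ∩ S).ncard ∈ Q :=
      ⟨insert u (Subtype.val '' T), hJind, hJcard, rfl⟩
    have hle := le_csSup hQbdd hmem
    omega
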